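/- For every integer m > 1, in the random uniform attachment graph process with degree cap d = 2m the conditional probability that a fixed open vertex receives a new edge in one step is at least 1/(m+1): for every n ≥ m+1, every graph G on {1,…,n}, and every vertex v of degree less than d in G, ℙ(G_n = G and v is adjacent to n+1 in G_{n+1}) ≥ ℙ(G_n = G)/(m+1). -/

import Mathlib

open Finset MeasureTheory Filter Topology FirstOrder
open scoped ENNReal

noncomputable section

open scoped Classical

/-- The degree of vertex `v` in the graph `g`, counting neighbors among `{1, …, n}`. -/
def degIn (g : SimpleGraph ℕ) (n v : ℕ) : ℕ :=
  ((Finset.Icc 1 n).filter fun u => g.Adj v u).card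

/-- The set of neighbors of vertex `v` in the graph `g` among `{1, …, n}`. -/
def nbrsIn (g : SimpleGraph ℕ) (n v : ℕ) : Finset ℕ :=
  (Finset.Icc 1 n).filter fun u => g.Adj v u

/-- `g'` is obtained from `g` (a graph on `{1,…,n}`) by one admissible uniform-attachment
step with parameter `m` and degree cap `d = 2m`: the new vertex `n+1` is joined to `m`
distinct vertices of `{1,…,n}`, each of degree `< 2m` in `g`; adjacencies among the other
vertices are unchanged, and all edges of `g'` stay inside `{1,…,n+1}`. -/
def IsUAStep (m n : ℕ) (g g' : SimpleGraph ℕ) : Prop :=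
  (∀ u v, g'.Adj u v → u ∈ Finset.Icc 1 (n+1) ∧ v ∈ Finset.Icc 1 (n+1)) ∧
  (∀ u v, u ≠ n+1 → v ≠ n+1 → (g'.Adj u v ↔ g.Adj u v)) ∧
  (nbrsIn g' (n+1) (n+1)).card = m ∧
  (∀ u, g'.Adj (n+1) u → u ∈ Finset.Icc 1 n ∧ degIn g n u < 2*m)

/-- The complete graph on the vertex set `{1, …, k}` (as a graph on `ℕ`). -/
def completeOn (k : ℕ) : SimpleGraph ℕ :=
  SimpleGraph.fromRel (fun u v => u ∈ Finset.Icc 1 k ∧ v ∈ Finset.Icc 1 k)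

/-- `N(g)`: the number of `m`-element sets of vertices of degree `< 2m` of a graph `g`
on `{1,…,n}`. -/
def numOpenSets (m n : ℕ) (g : SimpleGraph ℕ) : ℕ :=
  (((Finset.Icc 1 n).filter fun v => degIn g n v < 2*m).card).choose m

/-- The random uniform attachment graph process with parameter `m` (degree cap `d = 2m`),
modeled by random variables `G n` (for `n ≥ m+1`) on a probability space `(Ω, P)` taking
values in simple graphs on `{1,…,n}`: `G (m+1)` is a.s. the complete graph on `{1,…,m+1}`;
a.s. each `G (n+1)` is obtained from `G n` by an admissible uniform attachment step; and
for every graph `g` on `{1,…,n}` and every `m`-element set `S` of vertices of degree `< 2m`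
of `g`, `P(G n = g and the neighborhood of n+1 in G (n+1) equals S) = P(G n = g) / N(g)`. -/
structure UAProcess (m : ℕ) {Ω : Type} [MeasurableSpace Ω] (P : Measure Ω) where
  G : ℕ → Ω → SimpleGraph ℕ
  meas : ∀ n H, MeasurableSet {ω | G n ω = H}
  init : P {ω | G (m+1) ω = completeOn (m+1)} = 1
  stepAdm : ∀ n, m+1 ≤ n → P {ω | IsUAStep m n (G n ω) (G (n+1) ω)} = 1
  stepUnif : ∀ n, m+1 ≤ n → ∀ g : SimpleGraph ℕ,
    (∀ u v, g.Adj u v → u ∈ Finset.Icc 1 n ∧ v ∈ Finset.Icc 1 n) →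
    ∀ S : Finset ℕ, S.card = m →
    (∀ v ∈ S, v ∈ Finset.Icc 1 n ∧ degIn g n v < 2*m) →
    P {ω | G n ω = g ∧ nbrsIn (G (n+1) ω) (n+1) (n+1) = S} =
      P {ω | G n ω = g} / (numOpenSets m n g : ℝ≥0∞)


def GoodGraph (m n : ℕ) (g : SimpleGraph ℕ) : Prop :=
  (∀ u v, g.Adj u v → u ∈ Finset.Icc 1 n ∧ v ∈ Finset.Icc 1 n) ∧
  (∀ u ∈ Finset.Icc 1 n, degIn g n u ≤ 2*m) ∧
  (∑ u ∈ Finset.Icc 1 n, degIn g n u) + m*(m+1) = 2*m*n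

lemma good_complete {m : ℕ} (hm : 1 ≤ m) : GoodGraph m (m+1) (completeOn (m+1)) := by
  have hadj : ∀ u w : ℕ, (completeOn (m+1)).Adj u w ↔
      u ≠ w ∧ u ∈ Finset.Icc 1 (m+1) ∧ w ∈ Finset.Icc 1 (m+1) := by
    intro u w
    simp only [completeOn, SimpleGraph.fromRel_adj]
    tauto
  have hdeg : ∀ u ∈ Finset.Icc 1 (m+1), degIn (completeOn (m+1)) (m+1) u = m := by
    intro u hu
    have hflt : (Finset.Icc 1 (m+1)).filter (fun w => (completeOn (m+1)).Adj u w)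
        = (Finset.Icc 1 (m+1)).erase u := by
      ext w
      simp only [Finset.mem_filter, Finset.mem_erase, hadj]
      constructor
      · rintro ⟨hw, hne, _⟩; exact ⟨fun h => hne h.symm, hw⟩
      · rintro ⟨hne, hw⟩; exact ⟨hw, fun h => hne h.symm, hu, hw⟩
    have : degIn (completeOn (m+1)) (m+1) u
        = ((Finset.Icc 1 (m+1)).filter (fun w => (completeOn (m+1)).Adj u w)).card := rfl
    rw [this, hflt, Finset.card_erase_of_mem hu, Nat.card_Icc]
    omega
  refine ⟨?_, ?_, ?_⟩
  · intro u w h; exact ((hadj u w).mp h).2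
  · intro u hu; rw [hdeg u hu]; omega
  · rw [Finset.sum_congr rfl hdeg, Finset.sum_const, Nat.card_Icc, smul_eq_mul]
    have h1 : m + 1 + 1 - 1 = m + 1 := rfl
    rw [h1]; ring

lemma nbrs_step {m n : ℕ} {g g' : SimpleGraph ℕ} (h : IsUAStep m n g g') :
    nbrsIn g' (n+1) (n+1) = (Finset.Icc 1 n).filter (fun u => g'.Adj (n+1) u) := by
  show (Finset.Icc 1 (n+1)).filter (fun u => g'.Adj (n+1) u) = _
  rw [← Finset.insert_Icc_right_eq_Icc_add_one (by omega : 1 ≤ n+1), Finset.filter_insert]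
  rw [if_neg (by simp)]

lemma good_step {m n : ℕ} {g g' : SimpleGraph ℕ}
    (hG : GoodGraph m n g) (h : IsUAStep m n g g') : GoodGraph m (n+1) g' := by
  obtain ⟨hconf, hdeg, hsum⟩ := hG
  obtain ⟨h1, h2, h3, h4⟩ := h
  have hnot : (n+1) ∉ Finset.Icc 1 n := by simp
  have hnbrs : nbrsIn g' (n+1) (n+1) = (Finset.Icc 1 n).filter (fun u => g'.Adj (n+1) u) :=
    nbrs_step ⟨h1, h2, h3, h4⟩
  have hdegtop : degIn g' (n+1) (n+1) = m := h3
  have hdeg' : ∀ u ∈ Finset.Icc 1 n,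
      degIn g' (n+1) u = degIn g n u + (if g'.Adj u (n+1) then 1 else 0) := by
    intro u hu
    have hu' : u ≠ n+1 := by have := Finset.mem_Icc.mp hu; omega
    have hfe : (Finset.Icc 1 n).filter (fun w => g'.Adj u w)
        = (Finset.Icc 1 n).filter (fun w => g.Adj u w) := by
      apply Finset.filter_congr
      intro w hw
      have hw' : w ≠ n+1 := by have := Finset.mem_Icc.mp hw; omega
      simp [h2 u w hu' hw']
    show ((Finset.Icc 1 (n+1)).filter (fun w => g'.Adj u w)).card = _
    rw [← Finset.insert_Icc_right_eq_Icc_add_one (by omega : 1 ≤ n+1), Finset.filter_insert]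
    by_cases hadj : g'.Adj u (n+1)
    · rw [if_pos hadj, if_pos hadj,
        Finset.card_insert_of_notMem (fun hmem => hnot (Finset.mem_of_mem_filter _ hmem)), hfe]
      rfl
    · rw [if_neg hadj, if_neg hadj, hfe, Nat.add_zero]
      rfl
  refine ⟨h1, ?_, ?_⟩
  · intro u hu
    rcases eq_or_ne u (n+1) with rfl | hne
    · rw [hdegtop]; omega
    · have hu' : u ∈ Finset.Icc 1 n := by
        have := Finset.mem_Icc.mp hu; exact Finset.mem_Icc.mpr (by omega)
      rw [hdeg' u hu']
      by_cases hadj : g'.Adj u (n+1)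
      · have := (h4 u hadj.symm).2
        rw [if_pos hadj]; omega
      · rw [if_neg hadj]; have := hdeg u hu'; omega
  · have hsplit : ∑ u ∈ Finset.Icc 1 (n+1), degIn g' (n+1) u
        = degIn g' (n+1) (n+1) + ∑ u ∈ Finset.Icc 1 n, degIn g' (n+1) u := by
      rw [← Finset.insert_Icc_right_eq_Icc_add_one (by omega : 1 ≤ n+1), Finset.sum_insert hnot]
    have hcardadj : ((Finset.Icc 1 n).filter (fun u => g'.Adj u (n+1))).card = m := by
      have : (Finset.Icc 1 n).filter (fun u => g'.Adj u (n+1))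
          = (Finset.Icc 1 n).filter (fun u => g'.Adj (n+1) u) := by
        apply Finset.filter_congr; intro w hw; simp [SimpleGraph.adj_comm]
      rw [this, ← hnbrs, h3]
    have hmid : ∑ u ∈ Finset.Icc 1 n, degIn g' (n+1) u
        = (∑ u ∈ Finset.Icc 1 n, degIn g n u) + m := by
      rw [Finset.sum_congr rfl hdeg', Finset.sum_add_distrib, Finset.sum_boole]
      simp [hcardadj]
    rw [hsplit, hdegtop, hmid]
    have := hsum
    ring_nf
    ring_nf at this
    omega

def graphsOn (n : ℕ) : Finset (SimpleGraph ℕ) :=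
  ((Finset.Icc 1 n ×ˢ Finset.Icc 1 n).powerset).image
    (fun E => SimpleGraph.fromRel (fun u v => (u, v) ∈ E))

lemma mem_graphsOn {n : ℕ} {g : SimpleGraph ℕ}
    (hconf : ∀ u v, g.Adj u v → u ∈ Finset.Icc 1 n ∧ v ∈ Finset.Icc 1 n) :
    g ∈ graphsOn n := by
  apply Finset.mem_image.mpr
  refine ⟨(Finset.Icc 1 n ×ˢ Finset.Icc 1 n).filter (fun p => g.Adj p.1 p.2),
    Finset.mem_powerset.mpr (Finset.filter_subset _ _), ?_⟩
  ext u w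
  simp only [SimpleGraph.fromRel_adj, Finset.mem_filter, Finset.mem_product]
  constructor
  · rintro ⟨hne, h | h⟩
    · exact h.2
    · exact h.2.symm
  · intro h
    exact ⟨g.ne_of_adj h, Or.inl ⟨⟨(hconf u w h).1, (hconf u w h).2⟩, h⟩⟩

section Proc

variable {Ω : Type} [MeasurableSpace Ω] {P : Measure Ω}

lemma measurable_goodEv {m : ℕ} (X : UAProcess m P) (n : ℕ) :
    MeasurableSet {ω | GoodGraph m n (X.G n ω)} := by
  have hset : {ω | GoodGraph m n (X.G n ω)} =
      ⋃ h ∈ (graphsOn n).filter (fun h => GoodGraph m n h), {ω | X.G n ω = h} := by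
    ext ω
    simp only [Set.mem_setOf_eq, Set.mem_iUnion, Finset.mem_filter, exists_prop]
    constructor
    · intro hg
      exact ⟨X.G n ω, ⟨mem_graphsOn hg.1, hg⟩, rfl⟩
    · rintro ⟨h, ⟨_, hgood⟩, heq⟩
      rw [heq]; exact hgood
  rw [hset]
  exact ((graphsOn n).filter (fun h => GoodGraph m n h)).measurableSet_biUnion
    (fun h _ => X.meas n h)

lemma prob_le_inter [IsProbabilityMeasure P] {B X : Set Ω}
    (hB : MeasurableSet B) (hX : P X = 1) : P B ≤ P (X ∩ B) := by
  have h1 : P (X ∩ B) + P (X \ B) = P X := measure_inter_add_diff X hB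
  have h3 : P B + P Bᶜ = 1 := by
    rw [measure_add_measure_compl hB, measure_univ]
  have h2 : P B + P (X \ B) ≤ P (X ∩ B) + P (X \ B) := by
    calc P B + P (X \ B) ≤ P B + P Bᶜ :=
          add_le_add_right (measure_mono (fun ω hω => hω.2)) _
      _ = 1 := h3
      _ = P (X ∩ B) + P (X \ B) := by rw [h1, hX]
  exact (ENNReal.add_le_add_iff_right (measure_ne_top P _)).mp h2

lemma good_as {m : ℕ} (hm : 1 ≤ m) [IsProbabilityMeasure P]
    (X : UAProcess m P) : ∀ n, m+1 ≤ n → P {ω | GoodGraph m n (X.G n ω)} = 1 := by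
  intro n hn
  induction n, hn using Nat.le_induction with
  | base =>
    have hsub : {ω | X.G (m+1) ω = completeOn (m+1)}
        ⊆ {ω | GoodGraph m (m+1) (X.G (m+1) ω)} := by
      intro ω hω
      simp only [Set.mem_setOf_eq] at *
      rw [hω]; exact good_complete hm
    refine le_antisymm prob_le_one ?_
    calc (1:ℝ≥0∞) = P {ω | X.G (m+1) ω = completeOn (m+1)} := X.init.symm
      _ ≤ _ := measure_mono hsub
  | succ n hn ih =>
    have key := prob_le_inter (P := P) (measurable_goodEv X n) (X.stepAdm n hn)
    have hsub : {ω | IsUAStep m n (X.G n ω) (X.G (n+1) ω)} ∩ {ω | GoodGraph m n (X.G n ω)}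
        ⊆ {ω | GoodGraph m (n+1) (X.G (n+1) ω)} := by
      rintro ω ⟨hs, hgd⟩
      exact good_step hgd hs
    refine le_antisymm prob_le_one ?_
    calc (1:ℝ≥0∞) = P {ω | GoodGraph m n (X.G n ω)} := ih.symm
      _ ≤ _ := key
      _ ≤ _ := measure_mono hsub

end Proc

lemma card_open_le {m n : ℕ} {g : SimpleGraph ℕ} (hG : GoodGraph m n g) :
    ((Finset.Icc 1 n).filter fun u => degIn g n u < 2*m).card ≤ m*(m+1) := by
  obtain ⟨_, hdeg, hsum⟩ := hG
  have h1 : (∑ u ∈ Finset.Icc 1 n, (2*m - degIn g n u))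
      + ∑ u ∈ Finset.Icc 1 n, degIn g n u = 2*m*n := by
    rw [← Finset.sum_add_distrib]
    calc ∑ u ∈ Finset.Icc 1 n, (2*m - degIn g n u + degIn g n u)
        = ∑ _u ∈ Finset.Icc 1 n, 2*m := by
          apply Finset.sum_congr rfl
          intro u hu
          have := hdeg u hu
          omega
      _ = 2*m*n := by
          rw [Finset.sum_const, Nat.card_Icc, smul_eq_mul]
          have : n + 1 - 1 = n := rfl
          rw [this]; ring
  have h2 : ∑ u ∈ Finset.Icc 1 n, (2*m - degIn g n u) = m*(m+1) := by omega
  calc ((Finset.Icc 1 n).filter fun u => degIn g n u < 2*m).card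
      = ∑ _u ∈ (Finset.Icc 1 n).filter fun u => degIn g n u < 2*m, 1 := by simp
    _ ≤ ∑ u ∈ (Finset.Icc 1 n).filter (fun u => degIn g n u < 2*m), (2*m - degIn g n u) := by
        apply Finset.sum_le_sum
        intro u hu
        have := (Finset.mem_filter.mp hu).2
        omega
    _ ≤ ∑ u ∈ Finset.Icc 1 n, (2*m - degIn g n u) :=
        Finset.sum_le_sum_of_subset (Finset.filter_subset _ _)
    _ = m*(m+1) := h2

/-- In the random uniform attachment graph process with degree cap `d = 2m`,
the conditional probability that a fixed open vertex receives a new edge in one step is at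
least `1/(m+1)`: for every `n ≥ m+1`, every graph `g` on `{1,…,n}`, and every vertex `v`
of degree `< 2m` in `g`,
`P(G n = g and v adjacent to n+1 in G (n+1)) ≥ P(G n = g) / (m+1)`. -/
theorem uniform_attachment_open_vertex_hit_probability
    {Ω : Type} [MeasurableSpace Ω] (P : Measure Ω) [IsProbabilityMeasure P]
    (m : ℕ) (hm : 1 < m) (X : UAProcess m P) (n : ℕ) (hn : m + 1 ≤ n)
    (g : SimpleGraph ℕ) (hg : ∀ u v, g.Adj u v → u ∈ Finset.Icc 1 n ∧ v ∈ Finset.Icc 1 n)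
    (v : ℕ) (hv : v ∈ Finset.Icc 1 n) (hdeg : degIn g n v < 2*m) :
    P {ω | X.G n ω = g ∧ (X.G (n+1) ω).Adj (n+1) v} ≥
      P {ω | X.G n ω = g} / ((m : ℝ≥0∞) + 1) := by
  classical
  set A := {ω | X.G n ω = g} with hAdef
  by_cases hPA : P A = 0
  · rw [hPA, ENNReal.zero_div]; exact zero_le
  set O := (Finset.Icc 1 n).filter (fun u => degIn g n u < 2*m) with hOdef
  set k := O.card with hkdef
  have hvO : v ∈ O := Finset.mem_filter.mpr ⟨hv, hdeg⟩
  have hk1 : 1 ≤ k := Finset.card_pos.mpr ⟨v, hvO⟩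
  set SE := {ω | IsUAStep m n (X.G n ω) (X.G (n+1) ω)} with hSEdef
  have hSE1 : P SE = 1 := X.stepAdm n hn
  have hAmeas : MeasurableSet A := X.meas n g
  have hkey : P A ≤ P (SE ∩ A) := prob_le_inter hAmeas hSE1
  -- k ≥ m
  have hkm : m ≤ k := by
    have hne : (SE ∩ A).Nonempty := by
      rw [Set.nonempty_iff_ne_empty]
      intro hempty
      rw [hempty, measure_empty] at hkey
      exact hPA (le_antisymm hkey zero_le)
    obtain ⟨ω, hωS, hωA⟩ := hne
    have hgω : X.G n ω = g := hωA
    rw [Set.mem_setOf_eq, hgω] at hωS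
    obtain ⟨h1, h2, h3, h4⟩ := hωS
    have hsub : nbrsIn (X.G (n+1) ω) (n+1) (n+1) ⊆ O := by
      intro u hu
      have h4' := h4 u (Finset.mem_filter.mp hu).2
      exact Finset.mem_filter.mpr ⟨h4'.1, h4'.2⟩
    calc m = (nbrsIn (X.G (n+1) ω) (n+1) (n+1)).card := h3.symm
      _ ≤ k := Finset.card_le_card hsub
  -- g is Good
  have hgood : GoodGraph m n g := by
    have hkey2 : P A ≤ P ({ω | GoodGraph m n (X.G n ω)} ∩ A) :=
      prob_le_inter hAmeas (good_as hm.le X n hn)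
    have hne : ({ω | GoodGraph m n (X.G n ω)} ∩ A).Nonempty := by
      rw [Set.nonempty_iff_ne_empty]
      intro hempty
      rw [hempty, measure_empty] at hkey2
      exact hPA (le_antisymm hkey2 zero_le)
    obtain ⟨ω, hωG, hωA⟩ := hne
    have hgω : X.G n ω = g := hωA
    rwa [Set.mem_setOf_eq, hgω] at hωG
  have hkM : k ≤ m*(m+1) := card_open_le hgood
  -- combinatorics
  set c := k.choose m with hcdef
  have hcnum : numOpenSets m n g = c := rfl
  have hc0 : c ≠ 0 := (Nat.choose_pos hkm).ne'
  have hcast0 : (c:ℝ≥0∞) ≠ 0 := Nat.cast_ne_zero.mpr hc0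
  set C1 := (k-1).choose (m-1) with hC1def
  set C2 := (k-1).choose m with hC2def
  have hpascal : C1 + C2 = c := by
    have h1 : k - 1 + 1 = k := by omega
    have h2 : m - 1 + 1 = m := by omega
    rw [hcdef, hC1def, hC2def, ← h1, ← h2]
    rw [Nat.choose_succ_succ]
    simp [h2]
  have hCk : k * C1 = c * m := by
    have h := Nat.add_one_mul_choose_eq (k-1) (m-1)
    have h1 : k - 1 + 1 = k := by omega
    have h2 : m - 1 + 1 = m := by omega
    rw [h1, h2] at h
    exact h
  have hCle : c ≤ (m+1) * C1 := by
    have hmc : m * c ≤ m * ((m+1) * C1) := by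
      calc m * c = c * m := mul_comm _ _
        _ = k * C1 := hCk.symm
        _ ≤ (m*(m+1)) * C1 := Nat.mul_le_mul_right _ hkM
        _ = m * ((m+1) * C1) := by ring
    exact Nat.le_of_mul_le_mul_left hmc (by omega)
  -- events
  set Sbad := (O.erase v).powersetCard m with hSbaddef
  set T := {ω | X.G n ω = g ∧ (X.G (n+1) ω).Adj (n+1) v} with hTdef
  set E := fun S : Finset ℕ =>
    {ω | X.G n ω = g ∧ nbrsIn (X.G (n+1) ω) (n+1) (n+1) = S} with hEdef
  have hcov : SE ∩ A ⊆ T ∪ ⋃ S ∈ Sbad, E S := by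
    rintro ω ⟨hωS, hωA⟩
    have hgω : X.G n ω = g := hωA
    rw [Set.mem_setOf_eq, hgω] at hωS
    obtain ⟨h1, h2, h3, h4⟩ := hωS
    by_cases hadj : (X.G (n+1) ω).Adj (n+1) v
    · exact Or.inl ⟨hgω, hadj⟩
    · right
      refine Set.mem_biUnion ?_ (show ω ∈ E (nbrsIn (X.G (n+1) ω) (n+1) (n+1)) from ⟨hgω, rfl⟩)
      apply Finset.mem_powersetCard.mpr
      refine ⟨?_, h3⟩
      intro u hu
      have huA := (Finset.mem_filter.mp hu).2
      have h4' := h4 u huA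
      refine Finset.mem_erase.mpr ⟨?_, Finset.mem_filter.mpr ⟨h4'.1, h4'.2⟩⟩
      rintro rfl
      exact hadj huA
  have hsumle : P (SE ∩ A) ≤ P T + ∑ S ∈ Sbad, P (E S) := by
    calc P (SE ∩ A) ≤ P (T ∪ ⋃ S ∈ Sbad, E S) := measure_mono hcov
      _ ≤ P T + P (⋃ S ∈ Sbad, E S) := measure_union_le _ _
      _ ≤ P T + ∑ S ∈ Sbad, P (E S) :=
          add_le_add_right (measure_biUnion_finset_le _ _) _
  set q := P A / (c : ℝ≥0∞) with hqdef
  have hES : ∀ S ∈ Sbad, P (E S) = q := by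
    intro S hS
    obtain ⟨hSsub, hScard⟩ := Finset.mem_powersetCard.mp hS
    have hSopen : ∀ u ∈ S, u ∈ Finset.Icc 1 n ∧ degIn g n u < 2*m := by
      intro u hu
      exact Finset.mem_filter.mp (Finset.mem_of_mem_erase (hSsub hu))
    have := X.stepUnif n hn g hg S hScard hSopen
    rw [hEdef, hqdef, ← hcnum]
    exact this
  have hsum2 : ∑ S ∈ Sbad, P (E S) = (C2 : ℝ≥0∞) * q := by
    rw [Finset.sum_congr rfl hES, Finset.sum_const, Finset.card_powersetCard,
      Finset.card_erase_of_mem hvO, nsmul_eq_mul]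
  have hcq : (c : ℝ≥0∞) * q = P A :=
    ENNReal.mul_div_cancel hcast0 (ENNReal.natCast_ne_top c)
  have hqtop : q ≠ ⊤ := (ENNReal.div_lt_top (measure_ne_top P A) hcast0).ne
  have hlow : P A / ((m:ℝ≥0∞)+1) ≤ (C1 : ℝ≥0∞) * q := by
    rw [ENNReal.div_le_iff_le_mul (Or.inl (by simp)) (Or.inl (by simp))]
    calc P A = (c:ℝ≥0∞) * q := hcq.symm
      _ ≤ (((m+1) * C1 : ℕ):ℝ≥0∞) * q := mul_le_mul_left (Nat.cast_le.mpr hCle) q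
      _ = (C1:ℝ≥0∞) * q * ((m:ℝ≥0∞)+1) := by push_cast; ring
  have hchain : P A / ((m:ℝ≥0∞)+1) + (C2:ℝ≥0∞) * q ≤ P T + (C2:ℝ≥0∞) * q := by
    calc P A / ((m:ℝ≥0∞)+1) + (C2:ℝ≥0∞) * q
        ≤ (C1:ℝ≥0∞) * q + (C2:ℝ≥0∞) * q := add_le_add_left hlow _
      _ = ((C1 + C2 : ℕ):ℝ≥0∞) * q := by push_cast; ring
      _ = (c:ℝ≥0∞) * q := by rw [hpascal]
      _ = P A := hcq
      _ ≤ P (SE ∩ A) := hkey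
      _ ≤ P T + ∑ S ∈ Sbad, P (E S) := hsumle
      _ = P T + (C2:ℝ≥0∞) * q := by rw [hsum2]
  exact (ENNReal.add_le_add_iff_right
    (ENNReal.mul_ne_top (ENNReal.natCast_ne_top C2) hqtop)).mp hchain
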